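/- Let Ψ ∈ S(ℝ^n) with Ψ̂(0) = 0, and set Ψ_j(x) = 2^{jn}Ψ(2^j x) for j ∈ ℤ. Then there is a constant c such that (Σ_{j∈ℤ} |Ψ_j(x-y) - Ψ_j(x)|²)^{1/2} ≤ c |y| / |x|^{n+1} whenever |x| ≥ 2|y|. -/

import Mathlib

open MeasureTheory ENNReal

/-- The dilation `Ψ_j(x) = 2^{jn} Ψ(2^j x)`, `j ∈ ℤ`. -/
noncomputable def dyadicDilate {n : ℕ} (Ψ : SchwartzMap (EuclideanSpace ℝ (Fin n)) ℝ)
    (j : ℤ) (x : EuclideanSpace ℝ (Fin n)) : ℝ :=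
  (2 : ℝ) ^ (j * (n : ℤ)) * Ψ ((2 : ℝ) ^ j • x)

lemma norm_fderiv_eq_one {n : ℕ} (f : SchwartzMap (EuclideanSpace ℝ (Fin n)) ℝ)
    (w : EuclideanSpace ℝ (Fin n)) :
    ‖fderiv ℝ f w‖ = ‖iteratedFDeriv ℝ 1 f w‖ := by
  rw [← norm_iteratedFDeriv_fderiv (n := 0), norm_iteratedFDeriv_zero]

lemma dyadic_diff_bound {n : ℕ} (Ψ : SchwartzMap (EuclideanSpace ℝ (Fin n)) ℝ)
    {C : ℝ} (m : ℕ) (hC : ∀ w, ‖w‖ ^ m * ‖iteratedFDeriv ℝ 1 (⇑Ψ) w‖ ≤ C)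
    {x y : EuclideanSpace ℝ (Fin n)} (hx : 0 < ‖x‖) (hxy : 2 * ‖y‖ ≤ ‖x‖) (j : ℤ) :
    ‖dyadicDilate Ψ j (x - y) - dyadicDilate Ψ j x‖ ≤
      (2:ℝ) ^ (j * (n:ℤ)) * ((C / ((2:ℝ) ^ (j-1) * ‖x‖) ^ m) * ((2:ℝ) ^ j * ‖y‖)) := by
  have h2j : (0:ℝ) < 2 ^ j := zpow_pos (by norm_num) _
  set u := (2:ℝ) ^ j • x with hu
  set v := (2:ℝ) ^ j • (x - y) with hv
  have hLpos : 0 < (2:ℝ) ^ (j-1) * ‖x‖ := by positivity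
  have hseg : ∀ w ∈ segment ℝ u v, ‖fderiv ℝ (⇑Ψ) w‖ ≤ C / ((2:ℝ)^(j-1) * ‖x‖)^m := by
    rintro w hw
    obtain ⟨a, b, ha, hb, hab, rfl⟩ := hw
    obtain rfl : a = 1 - b := by linarith
    have hb1 : b ≤ 1 := by linarith
    have hw_eq : (1-b) • u + b • v = (2:ℝ)^j • (x - b • y) := by
      simp only [hu, hv]; module
    rw [hw_eq]
    have hnorm : (2:ℝ)^(j-1) * ‖x‖ ≤ ‖(2:ℝ)^j • (x - b • y)‖ := by
      have hby : ‖b • y‖ = b * ‖y‖ := by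
        rw [norm_smul, Real.norm_of_nonneg hb]
      have h1 : ‖x‖ - ‖b • y‖ ≤ ‖x - b • y‖ := norm_sub_norm_le _ _
      have h2 : ‖x‖/2 ≤ ‖x - b • y‖ := by nlinarith [norm_nonneg y]
      calc (2:ℝ)^(j-1) * ‖x‖ = 2^j * (‖x‖/2) := by
            rw [zpow_sub₀ (two_ne_zero), zpow_one]; ring
        _ ≤ 2^j * ‖x - b • y‖ := by gcongr
        _ = ‖(2:ℝ)^j • (x - b • y)‖ := by
            rw [norm_smul, Real.norm_of_nonneg h2j.le]
    set w := (2:ℝ)^j • (x - b • y)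
    have hwpos : 0 < ‖w‖ := lt_of_lt_of_le hLpos hnorm
    have hC0 : 0 ≤ C := le_trans (by positivity) (hC w)
    rw [norm_fderiv_eq_one, le_div_iff₀ (pow_pos hLpos m)]
    calc ‖iteratedFDeriv ℝ 1 (⇑Ψ) w‖ * ((2:ℝ)^(j-1) * ‖x‖)^m
        ≤ ‖iteratedFDeriv ℝ 1 (⇑Ψ) w‖ * ‖w‖^m := by
          gcongr
      _ = ‖w‖^m * ‖iteratedFDeriv ℝ 1 (⇑Ψ) w‖ := mul_comm _ _
      _ ≤ C := hC w
  have hmvt := (convex_segment u v).norm_image_sub_le_of_norm_fderiv_le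
      (fun w _ => Ψ.differentiable.differentiableAt) hseg
      (left_mem_segment ℝ u v) (right_mem_segment ℝ u v)
  have hvu : ‖v - u‖ = (2:ℝ)^j * ‖y‖ := by
    rw [hu, hv, ← smul_sub]
    rw [norm_smul, Real.norm_of_nonneg h2j.le]
    congr 1
    rw [show x - y - x = -y by abel, norm_neg]
  have hkey : dyadicDilate Ψ j (x - y) - dyadicDilate Ψ j x
      = (2:ℝ)^(j*(n:ℤ)) * (Ψ v - Ψ u) := by
    simp only [dyadicDilate, hu, hv, mul_sub]
  rw [hkey, norm_mul, Real.norm_of_nonneg (zpow_pos (by norm_num : (0:ℝ) < 2) _).le]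
  have := hmvt
  rw [hvu] at this
  gcongr
lemma two_zpow_mul (a b : ℤ) : (2:ℝ)^a * (2:ℝ)^b = (2:ℝ)^(a+b) :=
  (zpow_add₀ two_ne_zero a b).symm

lemma two_zpow_pow (a : ℤ) (m : ℕ) : ((2:ℝ)^a)^m = (2:ℝ)^(a * m) := by
  rw [← zpow_natCast ((2:ℝ)^a) m, ← zpow_mul]

/-- Enumeration of `{j | j ≤ j₀}` by `ℕ`. -/
def leEquiv (j₀ : ℤ) : ℕ ≃ ({j : ℤ | j ≤ j₀} : Set ℤ) where
  toFun k := ⟨j₀ - k, by simp only [Set.mem_setOf_eq]; omega⟩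
  invFun j := (j₀ - j.1).toNat
  left_inv k := by dsimp only; omega
  right_inv j := by
    have h := j.2
    simp only [Set.mem_setOf_eq] at h
    exact Subtype.ext (by dsimp only; omega)

/-- Enumeration of `{j | j ≤ j₀}ᶜ` by `ℕ`. -/
def gtEquiv (j₀ : ℤ) : ℕ ≃ (({j : ℤ | j ≤ j₀}ᶜ : Set ℤ)) where
  toFun k := ⟨j₀ + 1 + k, by simp only [Set.mem_compl_iff, Set.mem_setOf_eq]; omega⟩
  invFun j := (j.1 - (j₀ + 1)).toNat
  left_inv k := by dsimp only; omega
  right_inv j := by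
    have h := j.2
    simp only [Set.mem_compl_iff, Set.mem_setOf_eq] at h
    exact Subtype.ext (by dsimp only; omega)

/-- Hörmander regularity of the vector-valued kernel `{Ψ_j}`: for Schwartz `Ψ`
with `Ψ̂(0) = ∫ Ψ = 0`, one has `(Σ_j |Ψ_j(x-y) - Ψ_j(x)|²)^{1/2} ≤ c|y|/|x|^{n+1}`
whenever `|x| ≥ 2|y|`. -/
theorem hormander_condition (n : ℕ) (hn : 0 < n)
    (Ψ : SchwartzMap (EuclideanSpace ℝ (Fin n)) ℝ)
    (hΨ : ∫ x, Ψ x = 0) :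
    ∃ c : ℝ, 0 < c ∧ ∀ x y : EuclideanSpace ℝ (Fin n), 2 * ‖y‖ ≤ ‖x‖ →
      (∑' j : ℤ, (‖dyadicDilate Ψ j (x - y) - dyadicDilate Ψ j x‖₊ : ℝ≥0∞) ^ (2 : ℝ))
          ^ (1 / (2 : ℝ))
        ≤ ENNReal.ofReal (c * ‖y‖ / ‖x‖ ^ (n + 1)) := by
  obtain ⟨C₀, hC₀pos, hC₀⟩ := Ψ.decay 0 1
  obtain ⟨C₁, hC₁pos, hC₁⟩ := Ψ.decay (n+2) 1
  set C₁' : ℝ := C₁ * 2^(n+2) with hC₁'def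
  have hC₁'pos : 0 < C₁' := by positivity
  refine ⟨Real.sqrt (2*C₀^2 + 2*C₁'^2) + 1, by positivity, ?_⟩
  set c : ℝ := Real.sqrt (2*C₀^2 + 2*C₁'^2) + 1 with hcdef
  have hcpos : 0 < c := by positivity
  have hc2 : 2*C₀^2 + 2*C₁'^2 ≤ c^2 := by
    have h := Real.sq_sqrt (by positivity : (0:ℝ) ≤ 2*C₀^2 + 2*C₁'^2)
    nlinarith [Real.sqrt_nonneg (2*C₀^2 + 2*C₁'^2)]
  intro x y hxy
  by_cases hx0 : x = 0
  · have hy : y = 0 := by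
      have h0 : ‖y‖ ≤ 0 := by
        rw [hx0, norm_zero] at hxy; linarith
      exact norm_eq_zero.mp (le_antisymm h0 (norm_nonneg _))
    subst hy
    simp only [sub_zero, sub_self, nnnorm_zero, ENNReal.coe_zero]
    rw [ENNReal.zero_rpow_of_pos (by norm_num), tsum_zero,
      ENNReal.zero_rpow_of_pos (by norm_num)]
    exact zero_le
  · have ht : 0 < ‖x‖ := norm_pos_iff.mpr hx0
    set t : ℝ := ‖x‖ with htdef
    set P : ℝ := ‖y‖ / t^(n+1) with hPdef
    have hP0 : 0 ≤ P := by positivity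
    set g : ℤ → ℝ := fun j => ‖dyadicDilate Ψ j (x - y) - dyadicDilate Ψ j x‖ with hgdef
    have hg0 : ∀ j, 0 ≤ g j := fun j => norm_nonneg _
    set j₀ : ℤ := Int.log 2 t⁻¹ with hj₀def
    have h1 : (2:ℝ)^j₀ ≤ t⁻¹ := by
      exact_mod_cast Int.zpow_log_le_self (b := 2) (R := ℝ) (by norm_num) (inv_pos.mpr ht)
    have h2 : t⁻¹ < (2:ℝ)^(j₀+1) := by
      exact_mod_cast Int.lt_zpow_succ_log_self (b := 2) (R := ℝ) (by norm_num) t⁻¹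
    have h3 : (2:ℝ)^(-(j₀+1)) ≤ t := by
      have hp : (0:ℝ) < (2:ℝ)^(j₀+1) := zpow_pos (by norm_num) _
      rw [zpow_neg]
      have hinv : ((2:ℝ)^(j₀+1))⁻¹ * ((2:ℝ)^(j₀+1)) = 1 := inv_mul_cancel₀ hp.ne'
      have h4 : (1:ℝ) < t * (2:ℝ)^(j₀+1) := by
        have := mul_lt_mul_of_pos_left h2 ht
        rwa [mul_inv_cancel₀ ht.ne'] at this
      nlinarith [inv_pos.mpr hp]
    -- low-frequency estimate
    have hlow : ∀ k : ℕ, g (j₀ - (k:ℤ)) ≤ (C₀ * P) * (2⁻¹:ℝ)^k := by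
      intro k
      have hb := dyadic_diff_bound Ψ 0 hC₀ ht hxy (j₀ - (k:ℤ))
      rw [pow_zero, div_one] at hb
      refine hb.trans ?_
      have hq : (2:ℝ)^((j₀-(k:ℤ))*(n:ℤ)) * (2:ℝ)^(j₀-(k:ℤ)) = ((2:ℝ)^(j₀-(k:ℤ)))^(n+1) := by
        rw [two_zpow_mul, two_zpow_pow]
        congr 1; push_cast; ring
      have hqb : ((2:ℝ)^(j₀-(k:ℤ)))^(n+1) ≤ (t⁻¹)^(n+1) * (2⁻¹:ℝ)^k := by
        have e1 : (2:ℝ)^(j₀-(k:ℤ)) = (2:ℝ)^j₀ * ((2:ℝ)⁻¹)^k := by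
          rw [sub_eq_add_neg, ← two_zpow_mul]
          congr 1
          rw [zpow_neg, zpow_natCast, inv_pow]
        rw [e1, mul_pow]
        have e2 : ((2:ℝ)^j₀)^(n+1) ≤ (t⁻¹)^(n+1) := pow_le_pow_left₀ (by positivity) h1 _
        have e3 : (((2:ℝ)⁻¹)^k)^(n+1) ≤ ((2:ℝ)⁻¹)^k :=
          pow_le_of_le_one (by positivity) (pow_le_one₀ (by norm_num) (by norm_num))
            (Nat.succ_ne_zero n)
        exact mul_le_mul e2 e3 (by positivity) (by positivity)
      calc (2:ℝ)^((j₀-(k:ℤ))*(n:ℤ)) * (C₀ * ((2:ℝ)^(j₀-(k:ℤ)) * ‖y‖))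
          = C₀ * ‖y‖ * ((2:ℝ)^((j₀-(k:ℤ))*(n:ℤ)) * (2:ℝ)^(j₀-(k:ℤ))) := by ring
        _ = C₀ * ‖y‖ * ((2:ℝ)^(j₀-(k:ℤ)))^(n+1) := by rw [hq]
        _ ≤ C₀ * ‖y‖ * ((t⁻¹)^(n+1) * (2⁻¹:ℝ)^k) := by
            have hCy : 0 ≤ C₀ * ‖y‖ := by positivity
            exact mul_le_mul_of_nonneg_left hqb hCy
        _ = (C₀ * P) * (2⁻¹:ℝ)^k := by
            rw [hPdef, inv_pow]
            field_simp
    -- high-frequency estimate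
    have hhigh : ∀ k : ℕ, g (j₀ + 1 + (k:ℤ)) ≤ (C₁' * P) * (2⁻¹:ℝ)^k := by
      intro k
      set j : ℤ := j₀ + 1 + (k:ℤ) with hjdef
      have hb := dyadic_diff_bound Ψ (n+2) hC₁ ht hxy j
      refine hb.trans ?_
      have hL : ((2:ℝ)^(j-1) * t)^(n+2) = (2:ℝ)^((j-1)*((n:ℤ)+2)) * t^(n+2) := by
        rw [mul_pow, two_zpow_pow]
        congr 2
        try push_cast
        try ring
      rw [hL]
      have hexp : (2:ℝ)^(j*(n:ℤ)) * (2:ℝ)^j * ((2:ℝ)^((j-1)*((n:ℤ)+2)))⁻¹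
          = (2:ℝ)^((n:ℤ)+2-j) := by
        rw [← zpow_neg, two_zpow_mul, two_zpow_mul]
        congr 1; ring
      have heq : (2:ℝ)^(j*(n:ℤ)) * ((C₁ / ((2:ℝ)^((j-1)*((n:ℤ)+2)) * t^(n+2))) * ((2:ℝ)^j * ‖y‖))
          = C₁ * ‖y‖ * ((2:ℝ)^((n:ℤ)+2-j) / t^(n+2)) := by
        rw [← hexp]
        field_simp
      rw [heq]
      have e2 : (2:ℝ)^(-(k:ℤ)) = (2⁻¹:ℝ)^k := by rw [zpow_neg, zpow_natCast, inv_pow]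
      have e3 : (2:ℝ)^((n:ℤ)+2) = (2:ℝ)^(n+2 : ℕ) := by
        rw [← zpow_natCast (2:ℝ) (n+2)]
        congr 1
        try push_cast
        try ring
      have h2j' : (2:ℝ)^((n:ℤ)+2-j) ≤ 2^(n+2 : ℕ) * (t * (2⁻¹:ℝ)^k) := by
        have e : (2:ℝ)^((n:ℤ)+2-j)
            = (2:ℝ)^((n:ℤ)+2) * ((2:ℝ)^(-(j₀+1)) * (2:ℝ)^(-(k:ℤ))) := by
          rw [two_zpow_mul, two_zpow_mul]
          congr 1
          rw [hjdef]; ring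
        rw [e, e2, e3]
        have h2k : (0:ℝ) < (2⁻¹:ℝ)^k := by positivity
        have := mul_le_mul_of_nonneg_right h3 h2k.le
        exact mul_le_mul_of_nonneg_left this (by positivity)
      calc C₁ * ‖y‖ * ((2:ℝ)^((n:ℤ)+2-j) / t^(n+2))
          ≤ C₁ * ‖y‖ * ((2:ℝ)^(n+2 : ℕ) * (t * (2⁻¹:ℝ)^k) / t^(n+2)) := by
            have hCy : 0 ≤ C₁ * ‖y‖ := by positivity
            exact mul_le_mul_of_nonneg_left (by gcongr) hCy
        _ = (C₁' * P) * (2⁻¹:ℝ)^k := by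
            rw [hC₁'def, hPdef]
            field_simp
            ring
    -- pass to ℝ≥0∞
    have hF : ∀ j : ℤ, (‖dyadicDilate Ψ j (x - y) - dyadicDilate Ψ j x‖₊ : ℝ≥0∞) ^ (2:ℝ)
        = ENNReal.ofReal ((g j)^2) := by
      intro j
      rw [← enorm_eq_nnnorm, ← ofReal_norm,
        ENNReal.ofReal_rpow_of_nonneg (norm_nonneg _) (by norm_num : (0:ℝ) ≤ 2)]
      congr 1
      rw [show ((2:ℝ)) = ((2:ℕ):ℝ) by norm_num, Real.rpow_natCast]
    have geo_bound : ∀ A : ℝ, 0 ≤ A →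
        (∑' k : ℕ, ENNReal.ofReal ((A * (2⁻¹:ℝ)^k)^2)) ≤ ENNReal.ofReal (A^2 * 2) := by
      intro A hA
      have hsummable : Summable (fun k : ℕ => A^2 * (2⁻¹:ℝ)^k) :=
        (summable_geometric_of_lt_one (by norm_num) (by norm_num)).mul_left _
      have hstep : ∀ k : ℕ, ((A * (2⁻¹:ℝ)^k)^2) ≤ A^2 * (2⁻¹:ℝ)^k := by
        intro k
        have h4 : ((2⁻¹:ℝ)^k)^2 ≤ (2⁻¹:ℝ)^k := by
          have : (0:ℝ) ≤ (2⁻¹:ℝ)^k := by positivity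
          nlinarith [pow_le_one₀ (by norm_num : (0:ℝ) ≤ 2⁻¹) (by norm_num : (2⁻¹:ℝ) ≤ 1) (n := k)]
        calc (A * (2⁻¹:ℝ)^k)^2 = A^2 * ((2⁻¹:ℝ)^k)^2 := by ring
          _ ≤ A^2 * (2⁻¹:ℝ)^k := by
              exact mul_le_mul_of_nonneg_left h4 (by positivity)
      calc (∑' k : ℕ, ENNReal.ofReal ((A * (2⁻¹:ℝ)^k)^2))
          ≤ ∑' k : ℕ, ENNReal.ofReal (A^2 * (2⁻¹:ℝ)^k) :=
            ENNReal.tsum_le_tsum (fun k => ENNReal.ofReal_le_ofReal (hstep k))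
        _ = ENNReal.ofReal (∑' k : ℕ, A^2 * (2⁻¹:ℝ)^k) :=
            (ENNReal.ofReal_tsum_of_nonneg (fun k => by positivity) hsummable).symm
        _ = ENNReal.ofReal (A^2 * 2) := by
            rw [tsum_mul_left, tsum_geometric_inv_two]
    have hsum : (∑' j : ℤ, ENNReal.ofReal ((g j)^2))
        ≤ ENNReal.ofReal ((C₀*P)^2 * 2) + ENNReal.ofReal ((C₁'*P)^2 * 2) := by
      rw [← Summable.tsum_add_tsum_compl (f := fun j : ℤ => ENNReal.ofReal ((g j)^2))
        (s := {j : ℤ | j ≤ j₀}) ENNReal.summable ENNReal.summable]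
      gcongr
      · calc (∑' j : ({j : ℤ | j ≤ j₀} : Set ℤ), ENNReal.ofReal ((g j)^2))
            = ∑' k : ℕ, ENNReal.ofReal ((g (j₀ - (k:ℤ)))^2) :=
              ((leEquiv j₀).tsum_eq (fun j => ENNReal.ofReal ((g j.1)^2))).symm
          _ ≤ ∑' k : ℕ, ENNReal.ofReal (((C₀*P) * (2⁻¹:ℝ)^k)^2) :=
              ENNReal.tsum_le_tsum (fun k => ENNReal.ofReal_le_ofReal
                (pow_le_pow_left₀ (hg0 _) (hlow k) 2))
          _ ≤ ENNReal.ofReal ((C₀*P)^2 * 2) := geo_bound _ (by positivity)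
      · calc (∑' j : (({j : ℤ | j ≤ j₀}ᶜ : Set ℤ)), ENNReal.ofReal ((g j)^2))
            = ∑' k : ℕ, ENNReal.ofReal ((g (j₀ + 1 + (k:ℤ)))^2) :=
              ((gtEquiv j₀).tsum_eq (fun j => ENNReal.ofReal ((g j.1)^2))).symm
          _ ≤ ∑' k : ℕ, ENNReal.ofReal (((C₁'*P) * (2⁻¹:ℝ)^k)^2) :=
              ENNReal.tsum_le_tsum (fun k => ENNReal.ofReal_le_ofReal
                (pow_le_pow_left₀ (hg0 _) (hhigh k) 2))
          _ ≤ ENNReal.ofReal ((C₁'*P)^2 * 2) := geo_bound _ (by positivity)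
    have hfinal : (∑' j : ℤ, (‖dyadicDilate Ψ j (x - y) - dyadicDilate Ψ j x‖₊ : ℝ≥0∞) ^ (2:ℝ))
        ≤ ENNReal.ofReal ((c * ‖y‖ / t^(n+1))^2) := by
      simp only [hF]
      refine hsum.trans ?_
      rw [← ENNReal.ofReal_add (by positivity) (by positivity)]
      apply ENNReal.ofReal_le_ofReal
      have hr : c * ‖y‖ / t^(n+1) = c * P := by
        rw [hPdef]; ring
      rw [hr]
      calc (C₀*P)^2 * 2 + (C₁'*P)^2 * 2 = (2*C₀^2 + 2*C₁'^2) * P^2 := by ring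
        _ ≤ c^2 * P^2 := by
            exact mul_le_mul_of_nonneg_right hc2 (by positivity)
        _ = (c * P)^2 := by ring
    calc (∑' j : ℤ, (‖dyadicDilate Ψ j (x - y) - dyadicDilate Ψ j x‖₊ : ℝ≥0∞) ^ (2:ℝ))
          ^ (1 / (2:ℝ))
        ≤ (ENNReal.ofReal ((c * ‖y‖ / t^(n+1))^2)) ^ (1 / (2:ℝ)) :=
          ENNReal.rpow_le_rpow hfinal (by norm_num)
      _ = ENNReal.ofReal (c * ‖y‖ / t^(n+1)) := by
          have hr0 : (0:ℝ) ≤ c * ‖y‖ / t^(n+1) := by positivity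
          rw [show ((c * ‖y‖ / t^(n+1))^2) = (c * ‖y‖ / t^(n+1))^(2:ℕ) by norm_num,
            ← Real.rpow_natCast (c * ‖y‖ / t^(n+1)) 2,
            ← ENNReal.ofReal_rpow_of_nonneg hr0 (by norm_num : (0:ℝ) ≤ ((2:ℕ):ℝ)),
            ← ENNReal.rpow_mul]
          norm_num
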